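/- Suppose in addition that n = 2^m for some integer m ≥ 1. Then for every automorphism w in Γ, each i ∈ {1, −1}, and every integer k with 1−n ≤ k ≤ n−1, the coefficient of γ_k* in the basis expansion of w(φ_i*) is not divisible by 2n (in particular, it is nonzero). -/

import Mathlib

noncomputable section

/-- Index type for the basis `{β₁*, β₋₁*} ∪ {γ_k* : 1−n ≤ k ≤ n−1}`:
`Sum.inl true ↔ β₁*`, `Sum.inl false ↔ β₋₁*`, `Sum.inr ⟨k,_⟩ ↔ γ_k*`. -/
abbrev SIdx (n : ℤ) : Type := Bool ⊕ {k : ℤ // 1 - n ≤ k ∧ k ≤ n - 1}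

/-- The free `ℤ`-module on the basis `{β₁*, β₋₁*} ∪ {γ_k* : 1−n ≤ k ≤ n−1}`. -/
abbrev SMod (n : ℤ) : Type := SIdx n →₀ ℤ

/-- `true ↦ 1`, `false ↦ −1`: the index `i ∈ {1,−1}` encoded by a Boolean. -/
def sgn (b : Bool) : ℤ := if b then 1 else -1

/-- The basis element `β_i*` (with `i = 1` for `b = true` and `i = −1` for `b = false`). -/
def betaStar (n : ℤ) (b : Bool) : SMod n := Finsupp.single (Sum.inl b) 1

/-- The basis element `γ_k*` for `1−n ≤ k ≤ n−1`, and `0` otherwise (so in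
particular `γ_n* = γ_{−n}* = 0`). -/
def gammaStar (n : ℤ) (k : ℤ) : SMod n :=
  if h : 1 - n ≤ k ∧ k ≤ n - 1 then Finsupp.single (Sum.inr ⟨k, h⟩) 1 else 0

/-- The `ℤ`-linear endomorphism `σ*`: `β_i* ↦ β_{−i}*`, `γ_k* ↦ γ_{−k}*`. -/
def sigmaStar (n : ℤ) : SMod n →ₗ[ℤ] SMod n :=
  Finsupp.linearCombination ℤ
    (Sum.elim (fun b => betaStar n (!b)) (fun k : {k : ℤ // 1 - n ≤ k ∧ k ≤ n - 1} =>
      gammaStar n (-k.1)))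

/-- The `ℤ`-linear endomorphism `τ_o*`: `β_i* ↦ β_i*`,
`γ_k* ↦ −γ_{k−1}* + γ_k* − γ_{k+1}*` for `k` odd and `γ_k* ↦ γ_k*` for `k` even. -/
def tauOStar (n : ℤ) : SMod n →ₗ[ℤ] SMod n :=
  Finsupp.linearCombination ℤ
    (Sum.elim (fun b => betaStar n b) (fun k : {k : ℤ // 1 - n ≤ k ∧ k ≤ n - 1} =>
      if Odd k.1 then -gammaStar n (k.1 - 1) + gammaStar n k.1 - gammaStar n (k.1 + 1)
      else gammaStar n k.1))

/-- The `ℤ`-linear endomorphism `τ_e*`: `β_i* ↦ β_{−i}* + γ_i*`,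
`γ_k* ↦ γ_k*` for `k` odd and `γ_k* ↦ −γ_{k−1}* + γ_k* − γ_{k+1}*` for `k` even. -/
def tauEStar (n : ℤ) : SMod n →ₗ[ℤ] SMod n :=
  Finsupp.linearCombination ℤ
    (Sum.elim (fun b => betaStar n (!b) + gammaStar n (sgn b))
      (fun k : {k : ℤ // 1 - n ≤ k ∧ k ≤ n - 1} =>
        if Odd k.1 then gammaStar n k.1
        else -gammaStar n (k.1 - 1) + gammaStar n k.1 - gammaStar n (k.1 + 1)))

/-- `Γ`: the subgroup of the automorphism group of the module generated by the
automorphisms `σ*`, `τ_o*`, `τ_e*`. -/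
def GammaGrp (n : ℤ) : Subgroup (SMod n ≃ₗ[ℤ] SMod n) :=
  Subgroup.closure {w : SMod n ≃ₗ[ℤ] SMod n |
    (w : SMod n →ₗ[ℤ] SMod n) = sigmaStar n ∨
    (w : SMod n →ₗ[ℤ] SMod n) = tauOStar n ∨
    (w : SMod n →ₗ[ℤ] SMod n) = tauEStar n}

/-- `φ₁* = 2n·β₁* + Σ_{k=1−n}^{0} (k+n)·γ_k* − Σ_{k=1}^{n−1} (n−k)·γ_k*` and
`φ₋₁* = 2n·β₋₁* − Σ_{k=1−n}^{−1} (k+n)·γ_k* + n·γ₀* + Σ_{k=1}^{n−1} (n−k)·γ_k*`. -/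
def phiStar (n : ℤ) (b : Bool) : SMod n :=
  if b then
    (2 * n) • betaStar n true
      + ∑ k ∈ Finset.Icc (1 - n) 0, (k + n) • gammaStar n k
      - ∑ k ∈ Finset.Icc 1 (n - 1), (n - k) • gammaStar n k
  else
    (2 * n) • betaStar n false
      - ∑ k ∈ Finset.Icc (1 - n) (-1), (k + n) • gammaStar n k
      + n • gammaStar n 0
      + ∑ k ∈ Finset.Icc 1 (n - 1), (n - k) • gammaStar n k

def coefγ (n : ℤ) (v : SMod n) (k : ℤ) : ℤ :=
  if h : 1 - n ≤ k ∧ k ≤ n - 1 then v (Sum.inr ⟨k, h⟩) else 0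

lemma coefγ_zero (n k) : coefγ n 0 k = 0 := by unfold coefγ; split <;> simp
lemma coefγ_add (n : ℤ) (u v : SMod n) (k : ℤ) :
    coefγ n (u + v) k = coefγ n u k + coefγ n v k := by unfold coefγ; split <;> simp
lemma coefγ_sub (n : ℤ) (u v : SMod n) (k : ℤ) :
    coefγ n (u - v) k = coefγ n u k - coefγ n v k := by unfold coefγ; split <;> simp
lemma coefγ_neg (n : ℤ) (v : SMod n) (k : ℤ) :
    coefγ n (-v) k = -coefγ n v k := by unfold coefγ; split <;> simp
lemma coefγ_smul (n : ℤ) (c : ℤ) (v : SMod n) (k : ℤ) :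
    coefγ n (c • v) k = c * coefγ n v k := by unfold coefγ; split <;> simp
lemma coefγ_single_inl (n : ℤ) (b : Bool) (c k : ℤ) :
    coefγ n (Finsupp.single (Sum.inl b) c) k = 0 := by unfold coefγ; split <;> simp
lemma coefγ_single_inr (n : ℤ) (j : {k : ℤ // 1 - n ≤ k ∧ k ≤ n - 1}) (c k : ℤ) :
    coefγ n (Finsupp.single (Sum.inr j) c) k = if j.1 = k then c else 0 := by
  unfold coefγ
  split
  · rw [Finsupp.single_apply]; congr 1; simp [Subtype.ext_iff]
  · next h => rw [eq_comm, if_neg]; rintro rfl; exact h j.2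
lemma gammaStar_apply_inr (n a k : ℤ) (hk : 1 - n ≤ k ∧ k ≤ n - 1) :
    gammaStar n a (Sum.inr ⟨k, hk⟩) = if a = k then 1 else 0 := by
  unfold gammaStar
  split
  · rw [Finsupp.single_apply]; congr 1; simp [Subtype.ext_iff]
  · next h => rw [if_neg]; · simp
              rintro rfl; exact h hk
lemma gammaStar_apply_inl (n a : ℤ) (b : Bool) :
    gammaStar n a (Sum.inl b) = 0 := by
  unfold gammaStar; split <;> simp [Finsupp.single_apply]
lemma coefγ_gammaStar (n a k : ℤ) (hk : 1 - n ≤ k ∧ k ≤ n - 1) :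
    coefγ n (gammaStar n a) k = if a = k then 1 else 0 := by
  rw [coefγ, dif_pos hk, gammaStar_apply_inr]
lemma betaStar_apply_inl (n : ℤ) (b b' : Bool) :
    betaStar n b (Sum.inl b') = if b = b' then 1 else 0 := by
  rw [betaStar, Finsupp.single_apply]; simp
lemma betaStar_apply_inr (n : ℤ) (b : Bool) (j) :
    betaStar n b (Sum.inr j) = 0 := by
  rw [betaStar, Finsupp.single_apply]; simp
lemma coefγ_betaStar (n : ℤ) (b : Bool) (k : ℤ) :
    coefγ n (betaStar n b) k = 0 := by
  unfold coefγ; split <;> simp [betaStar_apply_inr]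

-- inl application lemmas
lemma sigma_apply_inl (n : ℤ) (v : SMod n) (b : Bool) :
    sigmaStar n v (Sum.inl b) = v (Sum.inl (!b)) := by
  induction v using Finsupp.induction_linear with
  | zero => simp
  | add f g hf hg => simp [hf, hg]
  | single a c =>
    rw [sigmaStar, Finsupp.linearCombination_single]
    rcases a with b' | j <;> simp only [Sum.elim_inl, Sum.elim_inr]
    · simp only [Sum.elim_inl, Finsupp.smul_apply, betaStar_apply_inl, Finsupp.single_apply,
        smul_eq_mul]
      cases b <;> cases b' <;> simp
    · simp [gammaStar_apply_inl, Finsupp.single_apply]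

lemma tauO_apply_inl (n : ℤ) (v : SMod n) (b : Bool) :
    tauOStar n v (Sum.inl b) = v (Sum.inl b) := by
  induction v using Finsupp.induction_linear with
  | zero => simp
  | add f g hf hg => simp [hf, hg]
  | single a c =>
    rw [tauOStar, Finsupp.linearCombination_single]
    rcases a with b' | j <;> simp only [Sum.elim_inl, Sum.elim_inr]
    · simp only [Sum.elim_inl, Finsupp.smul_apply, betaStar_apply_inl, Finsupp.single_apply,
        smul_eq_mul]
      cases b <;> cases b' <;> simp
    · by_cases hj : Odd j.1 <;>
        simp [hj, gammaStar_apply_inl, Finsupp.single_apply]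

lemma tauE_apply_inl (n : ℤ) (v : SMod n) (b : Bool) :
    tauEStar n v (Sum.inl b) = v (Sum.inl (!b)) := by
  induction v using Finsupp.induction_linear with
  | zero => simp
  | add f g hf hg => simp [hf, hg]
  | single a c =>
    rw [tauEStar, Finsupp.linearCombination_single]
    rcases a with b' | j <;> simp only [Sum.elim_inl, Sum.elim_inr]
    · simp only [Sum.elim_inl, Finsupp.smul_apply, Finsupp.add_apply, betaStar_apply_inl,
        gammaStar_apply_inl, Finsupp.single_apply, smul_eq_mul]
      cases b <;> cases b' <;> simp
    · by_cases hj : Odd j.1 <;>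
        simp [hj, gammaStar_apply_inl, Finsupp.single_apply]


lemma sigma_coef (n : ℤ) (v : SMod n) (k : ℤ) (hk : 1 - n ≤ k ∧ k ≤ n - 1) :
    coefγ n (sigmaStar n v) k = coefγ n v (-k) := by
  induction v using Finsupp.induction_linear with
  | zero => simp [coefγ_zero]
  | add f g hf hg => simp [coefγ_add, hf, hg]
  | single a c =>
    rw [sigmaStar, Finsupp.linearCombination_single]
    rcases a with b' | j <;> simp only [Sum.elim_inl, Sum.elim_inr]
    · simp [coefγ_smul, coefγ_betaStar, coefγ_single_inl]
    · rw [coefγ_smul, coefγ_gammaStar n _ k hk, coefγ_single_inr]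
      split_ifs <;> omega

lemma tauO_coef (n : ℤ) (v : SMod n) (k : ℤ) (hk : 1 - n ≤ k ∧ k ≤ n - 1) :
    coefγ n (tauOStar n v) k =
      coefγ n v k - (if Odd k then 0 else coefγ n v (k - 1) + coefγ n v (k + 1)) := by
  induction v using Finsupp.induction_linear with
  | zero => simp [coefγ_zero]
  | add f g hf hg => simp only [map_add, coefγ_add, hf, hg]; split_ifs <;> ring
  | single a c =>
    rw [tauOStar, Finsupp.linearCombination_single]
    rcases a with b' | j <;> simp only [Sum.elim_inl, Sum.elim_inr]
    · simp [coefγ_smul, coefγ_betaStar, coefγ_single_inl]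
    · rw [coefγ_smul]
      by_cases hj : Odd j.1
      · rw [if_pos hj, coefγ_sub, coefγ_add, coefγ_neg,
          coefγ_gammaStar n _ k hk, coefγ_gammaStar n _ k hk, coefγ_gammaStar n _ k hk]
        simp only [coefγ_single_inr, Int.odd_iff] at *
        split_ifs <;> omega
      · rw [if_neg hj, coefγ_gammaStar n _ k hk]
        simp only [coefγ_single_inr, Int.odd_iff] at *
        split_ifs <;> omega

lemma tauE_coef (n : ℤ) (v : SMod n) (k : ℤ) (hk : 1 - n ≤ k ∧ k ≤ n - 1) :
    coefγ n (tauEStar n v) k =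
      coefγ n v k - (if Odd k then coefγ n v (k - 1) + coefγ n v (k + 1) else 0)
        + (if k = 1 then v (Sum.inl true) else 0)
        + (if k = -1 then v (Sum.inl false) else 0) := by
  induction v using Finsupp.induction_linear with
  | zero => simp [coefγ_zero]
  | add f g hf hg => simp only [map_add, coefγ_add, hf, hg, Finsupp.add_apply]
                     split_ifs <;> ring
  | single a c =>
    rw [tauEStar, Finsupp.linearCombination_single]
    rcases a with b' | j <;> simp only [Sum.elim_inl, Sum.elim_inr]
    · rw [coefγ_smul, coefγ_add, coefγ_betaStar, coefγ_gammaStar n _ k hk]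
      simp only [coefγ_single_inl, Finsupp.single_apply, Sum.inl.injEq, Int.odd_iff]
      cases b' <;> simp only [sgn, Bool.false_eq_true, Bool.true_eq_false, if_true, if_false,
        reduceIte] <;> split_ifs <;> omega
    · rw [coefγ_smul]
      have hβ : ∀ b : Bool, (Finsupp.single (Sum.inr j) c : SMod n) (Sum.inl b) = 0 := by
        intro b; rw [Finsupp.single_apply]; simp
      by_cases hj : Odd j.1
      · rw [if_pos hj, coefγ_gammaStar n _ k hk]
        simp only [coefγ_single_inr, hβ, Int.odd_iff] at *
        split_ifs <;> omega
      · rw [if_neg hj, coefγ_sub, coefγ_add, coefγ_neg,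
          coefγ_gammaStar n _ k hk, coefγ_gammaStar n _ k hk, coefγ_gammaStar n _ k hk]
        simp only [coefγ_single_inr, hβ, Int.odd_iff] at *
        split_ifs <;> omega


def GInv (n : ℤ) (v : SMod n) : Prop :=
  (2 * n ∣ v (Sum.inl true)) ∧ (2 * n ∣ v (Sum.inl false)) ∧
  ∃ t u : ℤ, Odd t ∧ Odd u ∧
    ∀ k : ℤ, -n ≤ k → k ≤ n →
      2 * n ∣ coefγ n v k - n - (if Odd k then t else u) * k

lemma coefγ_out (n : ℤ) (v : SMod n) (k : ℤ) (h : ¬(1 - n ≤ k ∧ k ≤ n - 1)) :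
    coefγ n v k = 0 := by rw [coefγ, dif_neg h]

lemma GInv_bdry (n t u k : ℤ) (ht : Odd t) (hu : Odd u) (hk : k = n ∨ k = -n) :
    2 * n ∣ (0 : ℤ) - n - (if Odd k then t else u) * k := by
  have hodd : Odd (if Odd k then t else u) := by split_ifs; exacts [ht, hu]
  obtain ⟨s, hs⟩ := hodd
  rcases hk with rfl | rfl
  · exact ⟨-(s + 1), by rw [hs]; ring⟩
  · exact ⟨s, by rw [hs]; ring⟩

lemma tauO_coef_odd (n : ℤ) (v : SMod n) (k : ℤ) (hk : Odd k) :
    coefγ n (tauOStar n v) k = coefγ n v k := by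
  by_cases hr : 1 - n ≤ k ∧ k ≤ n - 1
  · rw [tauO_coef n v k hr, if_pos hk, sub_zero]
  · rw [coefγ_out n _ k hr, coefγ_out n v k hr]

lemma tauE_coef_even (n : ℤ) (v : SMod n) (k : ℤ) (hk : ¬Odd k) :
    coefγ n (tauEStar n v) k = coefγ n v k := by
  have h1 : k ≠ 1 := by rintro rfl; exact hk odd_one
  have h2 : k ≠ -1 := by rintro rfl; exact hk ⟨-1, by ring⟩
  by_cases hr : 1 - n ≤ k ∧ k ≤ n - 1
  · rw [tauE_coef n v k hr, if_neg hk, if_neg h1, if_neg h2, sub_zero, add_zero, add_zero]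
  · rw [coefγ_out n _ k hr, coefγ_out n v k hr]

lemma GInv_sigma_fwd (n : ℤ) (v : SMod n) (hI : GInv n v) : GInv n (sigmaStar n v) := by
  obtain ⟨h1, h2, t, u, ht, hu, hc⟩ := hI
  refine ⟨?_, ?_, -t, -u, ht.neg, hu.neg, ?_⟩
  · rw [sigma_apply_inl]; simpa using h2
  · rw [sigma_apply_inl]; simpa using h1
  · intro k hk1 hk2
    by_cases hr : 1 - n ≤ k ∧ k ≤ n - 1
    · rw [sigma_coef n v k hr]
      have h := hc (-k) (by omega) (by omega)
      have e : coefγ n v (-k) - n - (if Odd k then -t else -u) * k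
          = coefγ n v (-k) - n - (if Odd (-k) then t else u) * (-k) := by
        simp only [odd_neg]; split_ifs <;> ring
      rw [e]; exact h
    · rw [coefγ_out n _ k hr]
      exact GInv_bdry n (-t) (-u) k ht.neg hu.neg (by omega)

lemma GInv_sigma_bwd (n : ℤ) (v : SMod n) (hI : GInv n (sigmaStar n v)) : GInv n v := by
  obtain ⟨h1, h2, t, u, ht, hu, hc⟩ := hI
  rw [sigma_apply_inl] at h1 h2
  refine ⟨by simpa using h2, by simpa using h1, -t, -u, ht.neg, hu.neg, ?_⟩
  intro k hk1 hk2
  by_cases hr : 1 - n ≤ k ∧ k ≤ n - 1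
  · have hr' : 1 - n ≤ -k ∧ -k ≤ n - 1 := by omega
    have h := hc (-k) (by omega) (by omega)
    rw [sigma_coef n v (-k) hr', neg_neg] at h
    simp only [odd_neg] at h
    have e : coefγ n v k - n - (if Odd k then -t else -u) * k
        = coefγ n v k - n - (if Odd k then t else u) * (-k) := by
      split_ifs <;> ring
    rw [e]; exact h
  · rw [coefγ_out n _ k hr]
    exact GInv_bdry n (-t) (-u) k ht.neg hu.neg (by omega)


lemma odd_pred (k : ℤ) (hk : ¬Odd k) : Odd (k - 1) := by
  rw [Int.odd_iff] at *; omega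

lemma odd_succ (k : ℤ) (hk : ¬Odd k) : Odd (k + 1) := by
  rw [Int.odd_iff] at *; omega

lemma even_pred (k : ℤ) (hk : Odd k) : ¬Odd (k - 1) := by
  rw [Int.odd_iff] at *; omega

lemma even_succ (k : ℤ) (hk : Odd k) : ¬Odd (k + 1) := by
  rw [Int.odd_iff] at *; omega

lemma GInv_tauO_fwd (n : ℤ) (v : SMod n) (hI : GInv n v) : GInv n (tauOStar n v) := by
  obtain ⟨h1, h2, t, u, ht, hu, hc⟩ := hI
  refine ⟨by rw [tauO_apply_inl]; exact h1, by rw [tauO_apply_inl]; exact h2,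
    t, u - 2 * t, ht, by rcases ht with ⟨a, rfl⟩; rcases hu with ⟨c, rfl⟩; exact ⟨c - 2*a - 1, by ring⟩, ?_⟩
  intro k hk1 hk2
  by_cases hok : Odd k
  · rw [tauO_coef_odd n v k hok, if_pos hok]
    have h := hc k hk1 hk2
    rwa [if_pos hok] at h
  · by_cases hr : 1 - n ≤ k ∧ k ≤ n - 1
    · rw [tauO_coef n v k hr, if_neg hok, if_neg hok]
      have hA := hc k hk1 hk2
      rw [if_neg hok] at hA
      have hB := hc (k - 1) (by omega) (by omega)
      rw [if_pos (odd_pred k hok)] at hB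
      have hC := hc (k + 1) (by omega) (by omega)
      rw [if_pos (odd_succ k hok)] at hC
      have e : coefγ n v k - (coefγ n v (k - 1) + coefγ n v (k + 1)) - n - (u - 2 * t) * k
          = (coefγ n v k - n - u * k) - (coefγ n v (k - 1) - n - t * (k - 1))
            - (coefγ n v (k + 1) - n - t * (k + 1)) + 2 * n * (-1) := by ring
      rw [e]
      exact dvd_add (dvd_sub (dvd_sub hA hB) hC) (Dvd.intro _ rfl)
    · rw [coefγ_out n _ k hr]
      refine GInv_bdry n t (u - 2*t) k ht ?_ (by omega)
      rcases ht with ⟨a, rfl⟩; rcases hu with ⟨c, rfl⟩; exact ⟨c - 2*a - 1, by ring⟩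

lemma GInv_tauO_bwd (n : ℤ) (v : SMod n) (hI : GInv n (tauOStar n v)) : GInv n v := by
  obtain ⟨h1, h2, t, u, ht, hu, hc⟩ := hI
  rw [tauO_apply_inl] at h1 h2
  refine ⟨h1, h2, t, u + 2 * t, ht, by rcases ht with ⟨a, rfl⟩; rcases hu with ⟨c, rfl⟩; exact ⟨c + 2*a + 1, by ring⟩, ?_⟩
  intro k hk1 hk2
  by_cases hok : Odd k
  · have h := hc k hk1 hk2
    rw [tauO_coef_odd n v k hok, if_pos hok] at h
    rwa [if_pos hok]
  · by_cases hr : 1 - n ≤ k ∧ k ≤ n - 1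
    · have hA := hc k hk1 hk2
      rw [if_neg hok, tauO_coef n v k hr, if_neg hok] at hA
      have hB := hc (k - 1) (by omega) (by omega)
      rw [if_pos (odd_pred k hok), tauO_coef_odd n v (k-1) (odd_pred k hok)] at hB
      have hC := hc (k + 1) (by omega) (by omega)
      rw [if_pos (odd_succ k hok), tauO_coef_odd n v (k+1) (odd_succ k hok)] at hC
      rw [if_neg hok]
      have e : coefγ n v k - n - (u + 2 * t) * k
          = (coefγ n v k - (coefγ n v (k - 1) + coefγ n v (k + 1)) - n - u * k)
            + (coefγ n v (k - 1) - n - t * (k - 1))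
            + (coefγ n v (k + 1) - n - t * (k + 1)) + 2 * n * 1 := by ring
      rw [e]
      exact dvd_add (dvd_add (dvd_add hA hB) hC) (Dvd.intro _ rfl)
    · rw [coefγ_out n _ k hr]
      refine GInv_bdry n t (u + 2*t) k ht ?_ (by omega)
      rcases ht with ⟨a, rfl⟩; rcases hu with ⟨c, rfl⟩; exact ⟨c + 2*a + 1, by ring⟩

lemma GInv_tauE_fwd (n : ℤ) (v : SMod n) (hI : GInv n v) : GInv n (tauEStar n v) := by
  obtain ⟨h1, h2, t, u, ht, hu, hc⟩ := hI
  refine ⟨by rw [tauE_apply_inl]; simpa using h2, by rw [tauE_apply_inl]; simpa using h1,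
    t - 2 * u, u, by rcases ht with ⟨a, rfl⟩; rcases hu with ⟨c, rfl⟩; exact ⟨a - 2*c - 1, by ring⟩, hu, ?_⟩
  intro k hk1 hk2
  by_cases hok : Odd k
  · by_cases hr : 1 - n ≤ k ∧ k ≤ n - 1
    · rw [tauE_coef n v k hr, if_pos hok, if_pos hok]
      have hA := hc k hk1 hk2
      rw [if_pos hok] at hA
      have hB := hc (k - 1) (by omega) (by omega)
      rw [if_neg (even_pred k hok)] at hB
      have hC := hc (k + 1) (by omega) (by omega)
      rw [if_neg (even_succ k hok)] at hC
      have hd1 : 2 * n ∣ (if k = 1 then v (Sum.inl true) else 0) := by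
        split_ifs; exacts [h1, dvd_zero _]
      have hd2 : 2 * n ∣ (if k = -1 then v (Sum.inl false) else 0) := by
        split_ifs; exacts [h2, dvd_zero _]
      have e : coefγ n v k - (coefγ n v (k - 1) + coefγ n v (k + 1))
            + (if k = 1 then v (Sum.inl true) else 0)
            + (if k = -1 then v (Sum.inl false) else 0) - n - (t - 2 * u) * k
          = (coefγ n v k - n - t * k) - (coefγ n v (k - 1) - n - u * (k - 1))
            - (coefγ n v (k + 1) - n - u * (k + 1))
            + (if k = 1 then v (Sum.inl true) else 0)
            + (if k = -1 then v (Sum.inl false) else 0) + 2 * n * (-1) := by ring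
      rw [e]
      exact dvd_add (dvd_add (dvd_add (dvd_sub (dvd_sub hA hB) hC) hd1) hd2) (Dvd.intro _ rfl)
    · rw [coefγ_out n _ k hr]
      refine GInv_bdry n (t - 2*u) u k ?_ hu (by omega)
      rcases ht with ⟨a, rfl⟩; rcases hu with ⟨c, rfl⟩; exact ⟨a - 2*c - 1, by ring⟩
  · rw [tauE_coef_even n v k hok, if_neg hok]
    have h := hc k hk1 hk2
    rwa [if_neg hok] at h

lemma GInv_tauE_bwd (n : ℤ) (v : SMod n) (hI : GInv n (tauEStar n v)) : GInv n v := by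
  obtain ⟨h1, h2, t, u, ht, hu, hc⟩ := hI
  rw [tauE_apply_inl] at h1 h2
  simp only [Bool.not_true, Bool.not_false] at h1 h2
  refine ⟨h2, h1, t + 2 * u, u, by rcases ht with ⟨a, rfl⟩; rcases hu with ⟨c, rfl⟩; exact ⟨a + 2*c + 1, by ring⟩, hu, ?_⟩
  intro k hk1 hk2
  by_cases hok : Odd k
  · by_cases hr : 1 - n ≤ k ∧ k ≤ n - 1
    · have hA := hc k hk1 hk2
      rw [if_pos hok, tauE_coef n v k hr, if_pos hok] at hA
      have hB := hc (k - 1) (by omega) (by omega)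
      rw [if_neg (even_pred k hok), tauE_coef_even n v (k-1) (even_pred k hok)] at hB
      have hC := hc (k + 1) (by omega) (by omega)
      rw [if_neg (even_succ k hok), tauE_coef_even n v (k+1) (even_succ k hok)] at hC
      have hd1 : 2 * n ∣ (if k = 1 then v (Sum.inl true) else 0) := by
        split_ifs; exacts [h2, dvd_zero _]
      have hd2 : 2 * n ∣ (if k = -1 then v (Sum.inl false) else 0) := by
        split_ifs; exacts [h1, dvd_zero _]
      rw [if_pos hok]
      have e : coefγ n v k - n - (t + 2 * u) * k
          = (coefγ n v k - (coefγ n v (k - 1) + coefγ n v (k + 1))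
              + (if k = 1 then v (Sum.inl true) else 0)
              + (if k = -1 then v (Sum.inl false) else 0) - n - t * k)
            + (coefγ n v (k - 1) - n - u * (k - 1))
            + (coefγ n v (k + 1) - n - u * (k + 1))
            - (if k = 1 then v (Sum.inl true) else 0)
            - (if k = -1 then v (Sum.inl false) else 0) + 2 * n * 1 := by ring
      rw [e]
      exact dvd_add (dvd_sub (dvd_sub (dvd_add (dvd_add hA hB) hC) hd1) hd2) (Dvd.intro _ rfl)
    · rw [coefγ_out n _ k hr]
      refine GInv_bdry n (t + 2*u) u k ?_ hu (by omega)
      rcases ht with ⟨a, rfl⟩; rcases hu with ⟨c, rfl⟩; exact ⟨a + 2*c + 1, by ring⟩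
  · have h := hc k hk1 hk2
    rw [if_neg hok, tauE_coef_even n v k hok] at h
    rwa [if_neg hok]



lemma coefγ_gsum (n : ℤ) (S : Finset ℤ) (f : ℤ → ℤ) (k : ℤ) (hk : 1 - n ≤ k ∧ k ≤ n - 1) :
    coefγ n (∑ j ∈ S, f j • gammaStar n j) k = if k ∈ S then f k else 0 := by
  induction S using Finset.induction_on with
  | empty => simp [coefγ_zero]
  | @insert a S ha ih =>
    rw [Finset.sum_insert ha, coefγ_add, coefγ_smul, coefγ_gammaStar n a k hk, ih]
    by_cases hak : a = k
    · subst hak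
      simp [ha]
    · simp [Finset.mem_insert, hak, Ne.symm hak]

lemma gsum_apply_inl (n : ℤ) (S : Finset ℤ) (f : ℤ → ℤ) (b : Bool) :
    (∑ j ∈ S, f j • gammaStar n j) (Sum.inl b) = 0 := by
  rw [Finsupp.finset_sum_apply]
  simp [gammaStar_apply_inl]

lemma GInv_phi (n : ℤ) (hn : 2 ≤ n) (b : Bool) : GInv n (phiStar n b) := by
  cases b
  · -- b = false
    rw [phiStar, if_neg (by simp)]
    refine ⟨?_, ?_, -1, -1, odd_neg_one, odd_neg_one, ?_⟩
    · simp [Finsupp.add_apply, Finsupp.sub_apply, gsum_apply_inl, betaStar_apply_inl,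
        gammaStar_apply_inl]
    · simp [Finsupp.add_apply, Finsupp.sub_apply, gsum_apply_inl, betaStar_apply_inl,
        gammaStar_apply_inl]
    · intro k hk1 hk2
      by_cases hr : 1 - n ≤ k ∧ k ≤ n - 1
      · rw [show (if Odd k then (-1:ℤ) else -1) = -1 by simp, coefγ_add, coefγ_add, coefγ_sub,
          coefγ_smul, coefγ_smul, coefγ_betaStar, coefγ_gammaStar n 0 k hr,
          coefγ_gsum n _ _ k hr, coefγ_gsum n _ _ k hr]
        simp only [Finset.mem_Icc]
        split_ifs <;>
          first
          | exact ⟨0, by omega⟩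
          | exact ⟨-1, by omega⟩
          | (exfalso; omega)
      · rw [coefγ_out n _ k hr]
        exact GInv_bdry n (-1) (-1) k odd_neg_one odd_neg_one (by omega)
  · -- b = true
    rw [phiStar, if_pos rfl]
    refine ⟨?_, ?_, 1, 1, odd_one, odd_one, ?_⟩
    · simp [Finsupp.add_apply, Finsupp.sub_apply, gsum_apply_inl, betaStar_apply_inl]
    · simp [Finsupp.add_apply, Finsupp.sub_apply, gsum_apply_inl, betaStar_apply_inl]
    · intro k hk1 hk2
      by_cases hr : 1 - n ≤ k ∧ k ≤ n - 1
      · rw [show (if Odd k then (1:ℤ) else 1) = 1 by simp, coefγ_sub, coefγ_add,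
          coefγ_smul, coefγ_betaStar, coefγ_gsum n _ _ k hr, coefγ_gsum n _ _ k hr]
        simp only [Finset.mem_Icc]
        split_ifs <;>
          first
          | exact ⟨0, by omega⟩
          | exact ⟨-1, by omega⟩
          | (exfalso; omega)
      · rw [coefγ_out n _ k hr]
        exact GInv_bdry n 1 1 k odd_one odd_one (by omega)


lemma pow2_lemma : ∀ m : ℕ, 1 ≤ m → ∀ s k : ℤ, Odd s → k ≠ 0 → |k| < 2 ^ m →
    ¬ ((2:ℤ) ^ (m + 1) ∣ 2 ^ m + s * k) := by
  intro m
  induction m with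
  | zero => omega
  | succ m ih =>
    intro _ s k hs hk0 hk hdvd
    rcases Int.even_or_odd k with ⟨k', rfl⟩ | hko
    · have hk0' : k' ≠ 0 := by omega
      have hm : 1 ≤ m := by
        by_contra hm
        have : m = 0 := by omega
        subst this
        have : |k' + k'| < 2 := by simpa using hk
        rw [abs_lt] at this
        omega
      refine ih hm s k' hs hk0' ?_ ?_
      · have e : (2:ℤ) ^ (m + 1) = 2 * 2 ^ m := by ring
        rw [abs_lt] at hk ⊢
        rw [e] at hk
        omega
      · obtain ⟨c, hc⟩ := hdvd
        refine ⟨c, ?_⟩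
        have e1 : (2:ℤ) ^ (m + 1) = 2 * 2 ^ m := by ring
        have e2 : (2:ℤ) ^ (m + 1 + 1) = 2 * 2 ^ (m + 1) := by ring
        rw [e2, e1] at hc
        rw [e1]
        linarith
    · have h2 : (2:ℤ) ∣ 2 ^ (m + 1) + s * k :=
        dvd_trans ⟨2 ^ (m + 1), by ring⟩ hdvd
      have h3 : (2:ℤ) ∣ s * k := by
        have : (2:ℤ) ∣ 2 ^ (m + 1) := ⟨2 ^ m, by ring⟩
        omega
      have : Odd (s * k) := hs.mul hko
      rw [Int.odd_iff] at this
      omega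

lemma GInv_nondvd (n : ℤ) (hn : 2 ≤ n) (hpow : ∃ m : ℕ, 1 ≤ m ∧ n = 2 ^ m)
    (v : SMod n) (hI : GInv n v) (k : ℤ) (hk : 1 - n ≤ k ∧ k ≤ n - 1) :
    ¬ (2 * n ∣ v (Sum.inr ⟨k, hk⟩)) := by
  intro hdvd
  obtain ⟨m, hm, rfl⟩ := hpow
  obtain ⟨h1, h2, t, u, ht, hu, hc⟩ := hI
  have hck := hc k (by omega) (by omega)
  have hcv : coefγ (2 ^ m) v k = v (Sum.inr ⟨k, hk⟩) := by rw [coefγ, dif_pos hk]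
  rw [hcv] at hck
  set s : ℤ := if Odd k then t else u with hsdef
  have hs : Odd s := by rw [hsdef]; split_ifs; exacts [ht, hu]
  have hdvd2 : (2 * 2 ^ m : ℤ) ∣ (2 ^ m + s * k) := by
    have := dvd_sub hdvd hck
    have e : v (Sum.inr ⟨k, hk⟩) - (v (Sum.inr ⟨k, hk⟩) - 2 ^ m - s * k) = 2 ^ m + s * k := by
      ring
    rwa [e] at this
  rcases eq_or_ne k 0 with rfl | hk0
  · rw [mul_zero, add_zero] at hdvd2
    have hpos : (0:ℤ) < 2 ^ m := by positivity
    have := Int.le_of_dvd hpos hdvd2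
    omega
  · refine pow2_lemma m hm s k hs hk0 ?_ ?_
    · rw [abs_lt]; omega
    · have e : (2:ℤ) ^ (m + 1) = 2 * 2 ^ m := by ring
      rw [e]; exact hdvd2


lemma GInv_closure (n : ℤ) (w : SMod n ≃ₗ[ℤ] SMod n) (hw : w ∈ GammaGrp n) :
    ∀ v : SMod n, GInv n v → GInv n (w v) ∧ GInv n (w.symm v) := by
  rw [GammaGrp] at hw
  refine Subgroup.closure_induction
    (p := fun w _ => ∀ v : SMod n, GInv n v → GInv n (w v) ∧ GInv n (w.symm v))
    ?_ ?_ ?_ ?_ hw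
  · intro x hx v hv
    rcases hx with h | h | h
    · constructor
      · have e : x v = sigmaStar n v := LinearMap.congr_fun h v
        rw [e]; exact GInv_sigma_fwd n v hv
      · have e2 : sigmaStar n (x.symm v) = v := by
          have e3 := LinearMap.congr_fun h (x.symm v)
          rw [← e3]; exact x.apply_symm_apply v
        exact GInv_sigma_bwd n _ (by rw [e2]; exact hv)
    · constructor
      · have e : x v = tauOStar n v := LinearMap.congr_fun h v
        rw [e]; exact GInv_tauO_fwd n v hv
      · have e2 : tauOStar n (x.symm v) = v := by
          have e3 := LinearMap.congr_fun h (x.symm v)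
          rw [← e3]; exact x.apply_symm_apply v
        exact GInv_tauO_bwd n _ (by rw [e2]; exact hv)
    · constructor
      · have e : x v = tauEStar n v := LinearMap.congr_fun h v
        rw [e]; exact GInv_tauE_fwd n v hv
      · have e2 : tauEStar n (x.symm v) = v := by
          have e3 := LinearMap.congr_fun h (x.symm v)
          rw [← e3]; exact x.apply_symm_apply v
        exact GInv_tauE_bwd n _ (by rw [e2]; exact hv)
  · intro v hv
    exact ⟨hv, hv⟩
  · intro x y _ _ hpx hpy v hv
    exact ⟨(hpx (y v) ((hpy v hv).1)).1, (hpy (x.symm v) ((hpx v hv).2)).2⟩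
  · intro x _ hpx v hv
    exact ⟨(hpx v hv).2, (hpx v hv).1⟩


/-- If moreover `n = 2^m` with `m ≥ 1`, then for every automorphism `w ∈ Γ`, each
`i ∈ {1,−1}`, and every `k` with `1−n ≤ k ≤ n−1`, the coefficient of `γ_k*` in the
basis expansion of `w(φ_i*)` is not divisible by `2n` (in particular it is nonzero). -/
theorem instability_power_of_two (n : ℤ) (hn : 2 ≤ n)
    (hpow : ∃ m : ℕ, 1 ≤ m ∧ n = 2 ^ m)
    (w : SMod n ≃ₗ[ℤ] SMod n) (hw : w ∈ GammaGrp n) (b : Bool) :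
    ∀ (k : ℤ) (hk : 1 - n ≤ k ∧ k ≤ n - 1),
      ¬ (2 * n ∣ (w (phiStar n b)) (Sum.inr ⟨k, hk⟩)) := by
  intro k hk
  exact GInv_nondvd n hn hpow (w (phiStar n b))
    ((GInv_closure n w hw (phiStar n b) (GInv_phi n hn b)).1) k hk

end
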